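/- Let p be an odd prime with Pisano period l_p = 2p+2 and β(p) = 4, and let C = ⟨f(x)⟩ be the cyclic code of length 2p+2 over F_p generated by the Fibonacci polynomial f(x). Then the weight distribution of C is: A_0 = 1, A_{2p−2} = (p²−1)/2, A_{2p+2} = (p²−1)/2, and A_w = 0 for all other weights w, where A_w denotes the number of codewords of C of Hamming weight w. -/

import Mathlib

open Polynomial

/-- The Fibonacci sequence over `ZMod p`: `F 0 = 0`, `F 1 = 1`, `F (n+2) = F (n+1) + F n`. -/
def fibMod (p : ℕ) : ℕ → ZMod p
  | 0 => 0
  | 1 => 1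
  | n + 2 => fibMod p (n + 1) + fibMod p n

lemma fibMod_eq_cast (p n : ℕ) : fibMod p n = (Nat.fib n : ZMod p) := by
  induction n using Nat.strong_induction_on with
  | _ n ih =>
    match n with
    | 0 => simp [fibMod]
    | 1 => simp [fibMod]
    | n + 2 =>
      rw [fibMod, ih (n+1) (by omega), ih n (by omega), Nat.fib_add_two]
      push_cast; ring

lemma fibMod_add_two (p n : ℕ) : fibMod p (n+2) = fibMod p (n+1) + fibMod p n := rfl

lemma fibMod_mul_add (p m n : ℕ) :
    fibMod p (m + n + 1) = fibMod p m * fibMod p n + fibMod p (m+1) * fibMod p (n+1) := by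
  simp only [fibMod_eq_cast, ← Nat.cast_mul, ← Nat.cast_add, Nat.fib_add]

section
variable {p : ℕ} [Fact p.Prime]

lemma fibMod_one : fibMod p 1 = 1 := rfl
lemma fibMod_zero : fibMod p 0 = 0 := rfl
lemma fibMod_two : fibMod p 2 = 1 := by rw [fibMod_add_two, fibMod_one, fibMod_zero, add_zero]

/-- no two consecutive zeros -/
lemma fibMod_not_both_zero : ∀ n : ℕ, fibMod p n = 0 → fibMod p (n+1) ≠ 0 := by
  intro n
  induction n with
  | zero => intro _ h; rw [fibMod_one] at h; exact one_ne_zero h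
  | succ n ih =>
    intro h1 h2
    have h0 : fibMod p n = 0 := by
      have h3 := fibMod_add_two p n
      rw [h1, show n+1+1 = n+2 from rfl, h2] at *
      linear_combination -h3
    exact ih h0 h1
end

section
variable {p : ℕ} [Fact p.Prime] {L : ℕ}

lemma fibMod_period (h0 : fibMod p L = 0) (h1 : fibMod p (L+1) = 1) :
    ∀ n, fibMod p (n + L) = fibMod p n := by
  intro n
  induction n using Nat.strong_induction_on with
  | _ n ih =>
    match n with
    | 0 => rw [Nat.zero_add, h0]; rfl
    | 1 => rw [Nat.add_comm, h1]; rfl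
    | n + 2 =>
      have e : n + 2 + L = (n + L) + 2 := by omega
      rw [e, fibMod_add_two, show n + L + 1 = (n+1) + L from by omega,
        ih (n+1) (by omega), ih n (by omega), fibMod_add_two]

lemma fibMod_period_mul (h0 : fibMod p L = 0) (h1 : fibMod p (L+1) = 1) (n : ℕ) :
    ∀ k, fibMod p (n + k * L) = fibMod p n := by
  intro k
  induction k with
  | zero => rw [Nat.zero_mul, Nat.add_zero]
  | succ k ih =>
    rw [show n + (k+1)*L = (n + k*L) + L from by ring_nf, fibMod_period h0 h1, ih]

lemma fibMod_mod (h0 : fibMod p L = 0) (h1 : fibMod p (L+1) = 1) (n : ℕ) :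
    fibMod p (n % L) = fibMod p n := by
  conv_rhs => rw [show n = n % L + (n / L) * L from by rw [Nat.mod_add_div']]
  rw [fibMod_period_mul h0 h1]

lemma fibMod_shift {m : ℕ} (hm : fibMod p m = 0) :
    ∀ n, fibMod p (m + n) = fibMod p (m+1) * fibMod p n := by
  intro n
  match n with
  | 0 => rw [Nat.add_zero, hm, fibMod_zero, mul_zero]
  | k + 1 => rw [show m + (k+1) = m + k + 1 from rfl, fibMod_mul_add, hm, zero_mul, zero_add]

lemma fibMod_zero_iff {α : ℕ} (hα : 0 < α) (hαz : fibMod p α = 0)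
    (hmin : ∀ m, 0 < m → m < α → fibMod p m ≠ 0) :
    ∀ n, fibMod p n = 0 ↔ α ∣ n := by
  intro n
  constructor
  · intro hn
    induction n using Nat.strong_induction_on with
    | _ n ih =>
      rcases Nat.lt_or_ge n α with h | h
      · rcases Nat.eq_zero_or_pos n with rfl | hn0
        · exact dvd_zero _
        · exact absurd hn (hmin n hn0 h)
      · have hd : fibMod p (n - α) = 0 := by
          have e := fibMod_shift hαz (n - α)
          rw [show α + (n - α) = n from by omega, hn] at e
          have hu : fibMod p (α+1) ≠ 0 := fibMod_not_both_zero α hαz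
          field_simp at e
          exact (mul_eq_zero.1 e.symm).resolve_left hu
        have := ih (n - α) (by omega) hd
        have : α ∣ (n - α) + α := Dvd.dvd.add this dvd_rfl
        rwa [show n - α + α = n from by omega] at this
  · rintro ⟨k, rfl⟩
    induction k with
    | zero => rw [Nat.mul_zero]; rfl
    | succ k ih =>
      rw [show α * (k+1) = α + α * k from by ring, fibMod_shift hαz, ih, mul_zero]
end

/-- general solution of the Fibonacci recurrence -/
def Vfun (p : ℕ) (a b : ZMod p) (n : ℕ) : ZMod p := a * fibMod p (n+1) + b * fibMod p n

section
variable {p : ℕ} [Fact p.Prime] {L : ℕ} {a b : ZMod p}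

lemma Vfun_zero : Vfun p a b 0 = a := by
  simp [Vfun, fibMod_one, fibMod_zero]

lemma Vfun_one : Vfun p a b 1 = a + b := by
  simp [Vfun, fibMod_two, fibMod_one]

lemma Vfun_add_two (n : ℕ) : Vfun p a b (n+2) = Vfun p a b (n+1) + Vfun p a b n := by
  simp only [Vfun, fibMod_add_two]; ring

lemma Vfun_period_mul (h0 : fibMod p L = 0) (h1 : fibMod p (L+1) = 1) (n k : ℕ) :
    Vfun p a b (n + k * L) = Vfun p a b n := by
  simp only [Vfun, show n + k*L + 1 = (n+1) + k*L from by omega,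
    fibMod_period_mul h0 h1]

lemma Vfun_mod (h0 : fibMod p L = 0) (h1 : fibMod p (L+1) = 1) (n : ℕ) :
    Vfun p a b (n % L) = Vfun p a b n := by
  conv_rhs => rw [show n = n % L + (n / L) * L from by rw [Nat.mod_add_div']]
  rw [Vfun_period_mul h0 h1]

lemma Vfun_sol {m : ℕ} (hz : Vfun p a b m = 0) :
    ∀ n, Vfun p a b (m + n) = Vfun p a b (m+1) * fibMod p n := by
  intro n
  induction n using Nat.strong_induction_on with
  | _ n ih =>
    match n with
    | 0 => rw [Nat.add_zero, hz, fibMod_zero, mul_zero]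
    | 1 => rw [fibMod_one, mul_one]
    | n + 2 =>
      rw [show m + (n+2) = (m + n) + 2 from by omega, Vfun_add_two,
        show m + n + 1 = m + (n+1) from by omega, ih (n+1) (by omega), ih n (by omega),
        fibMod_add_two]
      ring

lemma Vfun_eq_zero_of_two_consec (h0 : fibMod p L = 0) (h1 : fibMod p (L+1) = 1)
    (hL : 0 < L) {m : ℕ} (hm : Vfun p a b m = 0) (hm1 : Vfun p a b (m+1) = 0) :
    a = 0 ∧ b = 0 := by
  have hall : ∀ n, Vfun p a b (m + n) = 0 := by
    intro n; rw [Vfun_sol hm, hm1, zero_mul]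
  have hle : m + 1 ≤ (m+1)*L := Nat.le_mul_of_pos_right _ hL
  have hV0 : Vfun p a b 0 = 0 := by
    have := hall ((m+1)*L - m)
    rwa [show m + ((m+1)*L - m) = 0 + (m+1)*L from by omega,
      Vfun_period_mul h0 h1] at this
  have hV1 : Vfun p a b 1 = 0 := by
    have := hall ((m+1)*L + 1 - m)
    rwa [show m + ((m+1)*L + 1 - m) = 1 + (m+1)*L from by omega,
      Vfun_period_mul h0 h1] at this
  rw [Vfun_zero] at hV0
  rw [Vfun_one, hV0, zero_add] at hV1
  exact ⟨hV0, hV1⟩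
end

/-- The Pisano period of `p`: the least `t > 0` with `F t = F 0 = 0` and `F (t+1) = F 1 = 1`. -/
noncomputable def pisano (p : ℕ) : ℕ :=
  sInf {t : ℕ | 0 < t ∧ fibMod p t = 0 ∧ fibMod p (t + 1) = 1}

/-- `β(p)`: the number of indices `0 ≤ i < l_p` with `F i = 0` in `ZMod p`. -/
noncomputable def betaP (p : ℕ) : ℕ :=
  ((Finset.range (pisano p)).filter fun i => fibMod p i = 0).card

/-- The Fibonacci polynomial `f(x) = ∑_{i=0}^{l_p - 1} F_i x^i` over `ZMod p`. -/
noncomputable def fibPoly (p : ℕ) : (ZMod p)[X] :=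
  ∑ i ∈ Finset.range (pisano p), C (fibMod p i) * X ^ i

/-- Cyclic shift of a vector of length `l`: the shift `v ↦ (v_{l-1}, v_0, …, v_{l-2})`,
which corresponds to multiplication by `x` modulo `x^l - 1` on coefficient vectors. -/
def cyclicShift (p l : ℕ) (v : Fin l → ZMod p) : Fin l → ZMod p :=
  fun i => v ⟨((i : ℕ) + (l - 1)) % l, Nat.mod_lt _ i.pos⟩

/-- The coefficient vector of length `l` of a polynomial. -/
def polyVec (p l : ℕ) (g : (ZMod p)[X]) : Fin l → ZMod p := fun i => g.coeff i

/-- The cyclic code of length `l` generated by `g`: the ideal generated by the image of `g`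
in `F_p[x]/(x^l - 1)`, identified with the subspace of `F_p^l` of coefficient vectors via
`a_0 + a_1 x + ⋯ + a_{l-1} x^{l-1} ↦ (a_0, …, a_{l-1})`; equivalently (since multiplication
by `x` is the cyclic shift), the `F_p`-span of all cyclic shifts of the coefficient vector
of `g`. -/
noncomputable def cyclicCode (p l : ℕ) (g : (ZMod p)[X]) :
    Submodule (ZMod p) (Fin l → ZMod p) :=
  Submodule.span (ZMod p) {w | ∃ k : ℕ, w = (cyclicShift p l)^[k] (polyVec p l g)}

/-- The cyclic code of length `l` generated by the Fibonacci polynomial `f(x)`. -/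
noncomputable def fibCode (p l : ℕ) : Submodule (ZMod p) (Fin l → ZMod p) :=
  cyclicCode p l (fibPoly p)

/-- the parametrization of codewords -/
def PhiF (p L : ℕ) (ab : ZMod p × ZMod p) : Fin L → ZMod p :=
  fun i => Vfun p ab.1 ab.2 (i : ℕ)

section
variable {p : ℕ} [Fact p.Prime] {L : ℕ}

lemma fibMod_sub_one (h0 : fibMod p L = 0) (h1 : fibMod p (L+1) = 1) (hL : 0 < L) (n : ℕ) :
    fibMod p (n + (L-1)) = fibMod p (n+1) - fibMod p n := by
  have e2 := fibMod_add_two p (n + (L-1))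
  rw [show n + (L-1) + 2 = (n+1) + L from by omega, show n + (L-1) + 1 = n + L from by omega,
    fibMod_period h0 h1, fibMod_period h0 h1] at e2
  linear_combination -e2

lemma polyVec_fibPoly (hl : pisano p = L) :
    polyVec p L (fibPoly p) = PhiF p L (0, 1) := by
  funext i
  simp only [polyVec, fibPoly, hl, PhiF, Vfun, finset_sum_coeff, coeff_C_mul, coeff_X_pow]
  rw [Finset.sum_eq_single (i : ℕ)]
  · simp
  · intro j _ hj; simp [Ne.symm hj]
  · intro h; exact absurd (Finset.mem_range.2 i.isLt) h

lemma cyclicShift_PhiF (h0 : fibMod p L = 0) (h1 : fibMod p (L+1) = 1) (hL : 0 < L)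
    (ab : ZMod p × ZMod p) :
    cyclicShift p L (PhiF p L ab) = PhiF p L (ab.2, ab.1 - ab.2) := by
  funext i
  show Vfun p ab.1 ab.2 (((i:ℕ) + (L-1)) % L) = _
  rw [Vfun_mod h0 h1]
  simp only [PhiF, Vfun, show (i:ℕ) + (L-1) + 1 = (i:ℕ) + L from by omega,
    fibMod_period h0 h1, fibMod_sub_one h0 h1 hL]
  ring

lemma mem_fibCode_iff (h0 : fibMod p L = 0) (h1 : fibMod p (L+1) = 1) (hL : 0 < L)
    (hl : pisano p = L) (v : Fin L → ZMod p) :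
    v ∈ fibCode p L ↔ ∃ ab : ZMod p × ZMod p, v = PhiF p L ab := by
  constructor
  · intro hv
    let Φlin : (ZMod p × ZMod p) →ₗ[ZMod p] (Fin L → ZMod p) :=
      { toFun := PhiF p L
        map_add' := by intro x y; funext i; simp [PhiF, Vfun]; ring
        map_smul' := by intro c x; funext i; simp [PhiF, Vfun]; ring }
    have hsub : fibCode p L ≤ LinearMap.range Φlin := by
      rw [fibCode, cyclicCode]
      apply Submodule.span_le.2
      rintro w ⟨k, rfl⟩
      induction k with
      | zero => exact ⟨(0,1), (polyVec_fibPoly hl).symm⟩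
      | succ k ih =>
        obtain ⟨ab, hab⟩ := ih
        exact ⟨(ab.2, ab.1 - ab.2), by
          rw [Function.iterate_succ_apply', ← hab]
          exact (cyclicShift_PhiF h0 h1 hL ab).symm⟩
    obtain ⟨ab, hab⟩ := hsub hv
    exact ⟨ab, hab.symm⟩
  · rintro ⟨⟨a, b⟩, rfl⟩
    have hg : polyVec p L (fibPoly p) ∈ fibCode p L :=
      Submodule.subset_span ⟨0, rfl⟩
    have hg1 : cyclicShift p L (polyVec p L (fibPoly p)) ∈ fibCode p L :=
      Submodule.subset_span ⟨1, by rw [Function.iterate_one]⟩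
    have heq : PhiF p L (a, b) =
        a • cyclicShift p L (polyVec p L (fibPoly p)) + (a+b) • polyVec p L (fibPoly p) := by
      rw [polyVec_fibPoly hl, cyclicShift_PhiF h0 h1 hL]
      funext i
      simp [PhiF, Vfun]
      ring
    rw [heq]
    exact Submodule.add_mem _ (Submodule.smul_mem _ _ hg1) (Submodule.smul_mem _ _ hg)

lemma PhiF_injective (hL : 1 < L) : Function.Injective (PhiF p L) := by
  intro x y hxy
  have h0 := congrFun hxy ⟨0, by omega⟩
  have h1 := congrFun hxy ⟨1, by omega⟩
  simp only [PhiF] at h0 h1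
  rw [Vfun_zero, Vfun_zero] at h0
  rw [Vfun_one, Vfun_one, h0] at h1
  have := add_left_cancel h1
  exact Prod.ext h0 this
end

section
open Finset
variable {p : ℕ} [Fact p.Prime] {L : ℕ}

lemma zeros_card_eq_four (h0 : fibMod p L = 0) (h1 : fibMod p (L+1) = 1) (hL : 0 < L)
    (hβ : ((Finset.range L).filter fun i => fibMod p i = 0).card = 4)
    {a b : ZMod p} (hab : ¬(a = 0 ∧ b = 0)) {i₀ : Fin L} (hz : Vfun p a b (i₀ : ℕ) = 0) :
    (Finset.univ.filter fun i : Fin L => Vfun p a b (i : ℕ) = 0).card = 4 := by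
  have hc : Vfun p a b ((i₀ : ℕ) + 1) ≠ 0 := by
    intro hc0
    exact hab (Vfun_eq_zero_of_two_consec h0 h1 hL hz hc0)
  have key : ∀ m, Vfun p a b ((i₀ : ℕ) + m) = Vfun p a b ((i₀ : ℕ)+1) * fibMod p m :=
    Vfun_sol hz
  have himg : (Finset.univ.filter fun i : Fin L => Vfun p a b (i : ℕ) = 0)
      = ((Finset.range L).filter fun m => fibMod p m = 0).image
        (fun m => (⟨((i₀ : ℕ) + m) % L, Nat.mod_lt _ hL⟩ : Fin L)) := by
    ext i
    simp only [Finset.mem_filter, Finset.mem_univ, true_and, Finset.mem_image,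
      Finset.mem_range]
    constructor
    · intro hi
      refine ⟨((i : ℕ) + L - (i₀ : ℕ)) % L, ⟨Nat.mod_lt _ hL, ?_⟩, ?_⟩
      · have hmod : ((i₀ : ℕ) + ((i : ℕ) + L - (i₀ : ℕ)) % L) % L = (i : ℕ) := by
          calc ((i₀ : ℕ) + ((i : ℕ) + L - (i₀ : ℕ)) % L) % L
              = ((i₀ : ℕ) + ((i : ℕ) + L - (i₀ : ℕ))) % L :=
                Nat.ModEq.add_left _ (Nat.mod_modEq _ L)
            _ = ((i : ℕ) + L) % L := by congr 1; omega
            _ = (i : ℕ) := by rw [Nat.add_mod_right, Nat.mod_eq_of_lt i.isLt]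
        have e1 := key (((i : ℕ) + L - (i₀ : ℕ)) % L)
        rw [← Vfun_mod h0 h1, hmod, hi] at e1
        exact (mul_eq_zero.1 e1.symm).resolve_left hc
      · have hmod : ((i₀ : ℕ) + ((i : ℕ) + L - (i₀ : ℕ)) % L) % L = (i : ℕ) := by
          calc ((i₀ : ℕ) + ((i : ℕ) + L - (i₀ : ℕ)) % L) % L
              = ((i₀ : ℕ) + ((i : ℕ) + L - (i₀ : ℕ))) % L :=
                Nat.ModEq.add_left _ (Nat.mod_modEq _ L)
            _ = ((i : ℕ) + L) % L := by congr 1; omega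
            _ = (i : ℕ) := by rw [Nat.add_mod_right, Nat.mod_eq_of_lt i.isLt]
        exact Fin.ext hmod
    · rintro ⟨m, ⟨hmL, hm0⟩, rfl⟩
      show Vfun p a b (((i₀ : ℕ) + m) % L) = 0
      rw [Vfun_mod h0 h1, key m, hm0, mul_zero]
  rw [himg, Finset.card_image_of_injOn, hβ]
  intro m₁ hm₁ m₂ hm₂ he
  simp only [Finset.mem_coe, Finset.mem_filter, Finset.mem_range] at hm₁ hm₂
  have := congrArg Fin.val he
  simp only at this
  have h2 : m₁ ≡ m₂ [MOD L] := Nat.ModEq.add_left_cancel' (i₀ : ℕ) this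
  rwa [Nat.ModEq, Nat.mod_eq_of_lt hm₁.1, Nat.mod_eq_of_lt hm₂.1] at h2

lemma line_card (i : ℕ) :
    (Finset.univ.filter fun ab : ZMod p × ZMod p =>
      ab ≠ 0 ∧ Vfun p ab.1 ab.2 i = 0).card = p - 1 := by
  have hnb : ¬(fibMod p i = 0 ∧ fibMod p (i+1) = 0) := by
    rintro ⟨x, y⟩; exact fibMod_not_both_zero i x y
  have hcard : ((Finset.univ : Finset (ZMod p)).erase 0).card = p - 1 := by
    rw [Finset.card_erase_of_mem (Finset.mem_univ _), Finset.card_univ, ZMod.card]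
  rw [← hcard]
  apply (Finset.card_bij (fun t _ => ((t * fibMod p i, -(t * fibMod p (i+1))) : ZMod p × ZMod p))
    ?_ ?_ ?_).symm
  · intro t ht
    rw [Finset.mem_erase] at ht
    simp only [Finset.mem_filter, Finset.mem_univ, true_and]
    constructor
    · intro h
      apply ht.1
      have h1 : t * fibMod p i = 0 := congrArg Prod.fst h
      have h2 : -(t * fibMod p (i+1)) = 0 := congrArg Prod.snd h
      rcases mul_eq_zero.1 h1 with h' | h'
      · exact h'
      · rcases mul_eq_zero.1 (neg_eq_zero.1 h2) with h'' | h''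
        · exact h''
        · exact absurd ⟨h', h''⟩ hnb
    · show t * fibMod p i * fibMod p (i+1) + -(t * fibMod p (i+1)) * fibMod p i = 0
      ring
  · intro t₁ h₁ t₂ h₂ he
    rw [Prod.ext_iff] at he
    simp only [neg_inj] at he
    rcases (not_and_or.1 hnb) with h' | h'
    · exact mul_right_cancel₀ h' he.1
    · exact mul_right_cancel₀ h' he.2
  · rintro ⟨x, y⟩ hxy
    simp only [Finset.mem_filter, Finset.mem_univ, true_and] at hxy
    obtain ⟨hne, hV⟩ := hxy
    simp only [Vfun] at hV
    by_cases hFi : fibMod p i = 0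
    · have hFi1 : fibMod p (i+1) ≠ 0 := fibMod_not_both_zero i hFi
      have hx0 : x = 0 := by
        rw [hFi, mul_zero, add_zero, mul_eq_zero] at hV
        exact hV.resolve_right hFi1
      have hy0 : y ≠ 0 := by
        intro h; exact hne (Prod.ext hx0 h)
      refine ⟨-(y / fibMod p (i+1)), Finset.mem_erase.2 ⟨?_, Finset.mem_univ _⟩, ?_⟩
      · simp only [ne_eq, neg_eq_zero, _root_.div_eq_zero_iff, not_or]
        exact ⟨hy0, hFi1⟩
      · rw [Prod.ext_iff]
        constructor
        · show -(y / fibMod p (i+1)) * fibMod p i = x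
          rw [hFi, mul_zero, hx0]
        · show -(-(y / fibMod p (i+1)) * fibMod p (i+1)) = y
          field_simp
    · have hx0 : x ≠ 0 := by
        intro h
        rw [h, zero_mul, zero_add, mul_eq_zero] at hV
        exact hne (Prod.ext h (hV.resolve_right hFi))
      refine ⟨x / fibMod p i, Finset.mem_erase.2 ⟨?_, Finset.mem_univ _⟩, ?_⟩
      · simp only [ne_eq, _root_.div_eq_zero_iff, not_or]
        exact ⟨hx0, hFi⟩
      · rw [Prod.ext_iff]
        constructor
        · show x / fibMod p i * fibMod p i = x
          field_simp
        · show -(x / fibMod p i * fibMod p (i+1)) = y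
          field_simp
          linear_combination -hV
end

section
open Finset
variable {p : ℕ} [Fact p.Prime] {L : ℕ}

lemma double_count (h0 : fibMod p L = 0) (h1 : fibMod p (L+1) = 1) (hL : 0 < L)
    (hβ : ((Finset.range L).filter fun i => fibMod p i = 0).card = 4) :
    4 * (Finset.univ.filter fun ab : ZMod p × ZMod p =>
        ab ≠ 0 ∧ ∃ i : Fin L, Vfun p ab.1 ab.2 (i:ℕ) = 0).card
      = L * (p - 1) := by
  classical
  set B := Finset.univ.filter fun ab : ZMod p × ZMod p =>
      ab ≠ 0 ∧ ∃ i : Fin L, Vfun p ab.1 ab.2 (i:ℕ) = 0 with hB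
  set NZ := Finset.univ.filter fun ab : ZMod p × ZMod p => ab ≠ 0 with hNZ
  have hBsub : B ⊆ NZ := by
    intro ab hab
    rw [hB, Finset.mem_filter] at hab
    rw [hNZ, Finset.mem_filter]
    exact ⟨hab.1, hab.2.1⟩
  have key1 : ∑ ab ∈ NZ, (Finset.univ.filter fun i : Fin L =>
      Vfun p ab.1 ab.2 (i:ℕ) = 0).card = 4 * B.card := by
    rw [← Finset.sum_subset hBsub ?_]
    · rw [Finset.sum_congr rfl (g := fun _ => 4) ?_, Finset.sum_const, smul_eq_mul, mul_comm]
      intro ab hab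
      rw [hB, Finset.mem_filter] at hab
      obtain ⟨-, habne, i₀, hi₀⟩ := hab
      refine zeros_card_eq_four h0 h1 hL hβ ?_ hi₀
      intro ⟨ha, hb⟩
      exact habne (Prod.ext ha hb)
    · intro ab hab hnb
      rw [Finset.card_eq_zero, Finset.filter_eq_empty_iff]
      intro i _
      rw [hNZ, Finset.mem_filter] at hab
      rw [hB, Finset.mem_filter] at hnb
      intro hzi
      exact hnb ⟨Finset.mem_univ _, hab.2, i, hzi⟩
  have key2 : ∑ ab ∈ NZ, (Finset.univ.filter fun i : Fin L =>
      Vfun p ab.1 ab.2 (i:ℕ) = 0).card = L * (p - 1) := by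
    have e1 : ∀ ab : ZMod p × ZMod p, (Finset.univ.filter fun i : Fin L =>
        Vfun p ab.1 ab.2 (i:ℕ) = 0).card
        = ∑ i : Fin L, if Vfun p ab.1 ab.2 (i:ℕ) = 0 then 1 else 0 :=
      fun ab => Finset.card_filter _ _
    calc ∑ ab ∈ NZ, (Finset.univ.filter fun i : Fin L => Vfun p ab.1 ab.2 (i:ℕ) = 0).card
        = ∑ ab ∈ NZ, ∑ i : Fin L, if Vfun p ab.1 ab.2 (i:ℕ) = 0 then 1 else 0 :=
          Finset.sum_congr rfl (fun ab _ => e1 ab)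
      _ = ∑ i : Fin L, ∑ ab ∈ NZ, if Vfun p ab.1 ab.2 (i:ℕ) = 0 then 1 else 0 :=
          Finset.sum_comm
      _ = ∑ i : Fin L, (NZ.filter fun ab => Vfun p ab.1 ab.2 (i:ℕ) = 0).card :=
          Finset.sum_congr rfl (fun i _ => (Finset.card_filter _ _).symm)
      _ = ∑ _i : Fin L, (p - 1) := by
          refine Finset.sum_congr rfl (fun i _ => ?_)
          rw [hNZ, Finset.filter_filter]
          exact line_card (i : ℕ)
      _ = L * (p - 1) := by
          rw [Finset.sum_const, Finset.card_univ, Fintype.card_fin, smul_eq_mul]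
  rw [← key1, key2]
end

/-- Weight distribution for `l_p = 2p + 2`, `β(p) = 4`:
`A_0 = 1`, `A_{2p-2} = (p²-1)/2`, `A_{2p+2} = (p²-1)/2`, and `A_w = 0` otherwise. -/
theorem fibCode_weight_distribution_long_beta_four (p : ℕ) [Fact p.Prime] (hodd : Odd p)
    (hl : pisano p = 2 * p + 2) (hb : betaP p = 4) :
    Set.ncard {v | v ∈ fibCode p (2 * p + 2) ∧ hammingNorm v = 0} = 1 ∧
      Set.ncard {v | v ∈ fibCode p (2 * p + 2) ∧ hammingNorm v = 2 * p - 2}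
        = (p ^ 2 - 1) / 2 ∧
      Set.ncard {v | v ∈ fibCode p (2 * p + 2) ∧ hammingNorm v = 2 * p + 2}
        = (p ^ 2 - 1) / 2 ∧
      ∀ w : ℕ, w ≠ 0 → w ≠ 2 * p - 2 → w ≠ 2 * p + 2 →
        Set.ncard {v | v ∈ fibCode p (2 * p + 2) ∧ hammingNorm v = w} = 0 := by
  classical
  have hp : p.Prime := Fact.out
  have hp2 : p ≠ 2 := by rintro rfl; revert hodd; decide
  have hp3 : 3 ≤ p := by have := hp.two_le; omega
  set L := 2 * p + 2 with hLdef
  have hL : 0 < L := by omega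
  have hL2 : 1 < L := by omega
  -- extract the defining properties of the Pisano period
  have hl' : sInf {t : ℕ | 0 < t ∧ fibMod p t = 0 ∧ fibMod p (t + 1) = 1} = L := hl
  have hne : {t : ℕ | 0 < t ∧ fibMod p t = 0 ∧ fibMod p (t + 1) = 1}.Nonempty := by
    by_contra h
    rw [Set.not_nonempty_iff_eq_empty] at h
    rw [h, Nat.sInf_empty] at hl'
    omega
  have hmem := Nat.sInf_mem hne
  rw [hl'] at hmem
  obtain ⟨-, h0, h1⟩ := hmem
  have hβ : ((Finset.range L).filter fun i => fibMod p i = 0).card = 4 := by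
    have hb' : ((Finset.range (pisano p)).filter fun i => fibMod p i = 0).card = 4 := hb
    rwa [hl] at hb'
  -- norm and zero count
  have hnormz : ∀ ab : ZMod p × ZMod p, hammingNorm (PhiF p L ab)
      + (Finset.univ.filter fun i : Fin L => Vfun p ab.1 ab.2 (i:ℕ) = 0).card = L := by
    intro ab
    have hpart := Finset.card_filter_add_card_filter_not (s := Finset.univ)
      (p := fun i : Fin L => Vfun p ab.1 ab.2 (i:ℕ) = 0)
    rw [Finset.card_univ, Fintype.card_fin] at hpart
    have hnorm : hammingNorm (PhiF p L ab)
        = (Finset.univ.filter fun i : Fin L => ¬(Vfun p ab.1 ab.2 (i:ℕ) = 0)).card := by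
      simp [hammingNorm, PhiF]; congr
    omega
  have hPhi0 : PhiF p L (0 : ZMod p × ZMod p) = 0 := by
    funext i; simp [PhiF, Vfun]
  have hclass : ∀ ab : ZMod p × ZMod p, ab ≠ 0 →
      ((∃ i : Fin L, Vfun p ab.1 ab.2 (i:ℕ) = 0) ∧ hammingNorm (PhiF p L ab) = 2*p-2)
      ∨ ((¬∃ i : Fin L, Vfun p ab.1 ab.2 (i:ℕ) = 0)
          ∧ hammingNorm (PhiF p L ab) = L) := by
    intro ab hab
    by_cases hz : ∃ i : Fin L, Vfun p ab.1 ab.2 (i:ℕ) = 0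
    · left
      refine ⟨hz, ?_⟩
      obtain ⟨i₀, hi₀⟩ := hz
      have h4 := zeros_card_eq_four h0 h1 hL hβ
        (fun h => hab (Prod.ext h.1 h.2)) hi₀
      have := hnormz ab
      omega
    · right
      refine ⟨hz, ?_⟩
      have hzero : (Finset.univ.filter fun i : Fin L =>
          Vfun p ab.1 ab.2 (i:ℕ) = 0).card = 0 := by
        rw [Finset.card_eq_zero, Finset.filter_eq_empty_iff]
        exact fun i _ h => hz ⟨i, h⟩
      have := hnormz ab
      omega
  have hinj : Function.Injective (PhiF p L) := PhiF_injective hL2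
  -- the two finsets of parameters
  set B := Finset.univ.filter (fun ab : ZMod p × ZMod p =>
      ab ≠ 0 ∧ ∃ i : Fin L, Vfun p ab.1 ab.2 (i:ℕ) = 0) with hBdef
  set B' := Finset.univ.filter (fun ab : ZMod p × ZMod p =>
      ab ≠ 0 ∧ ¬∃ i : Fin L, Vfun p ab.1 ab.2 (i:ℕ) = 0) with hB'def
  obtain ⟨q, hq⟩ : ∃ q, q = p^2 := ⟨_, rfl⟩
  have hq2 : q = p * p := by rw [hq]; ring
  have hq9 : 9 ≤ q := by nlinarith
  have hdc := double_count h0 h1 hL hβ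
  have harith : L * (p - 1) = 2 * (q - 1) := by
    rw [hLdef, hq2]
    zify [show 1 ≤ p from by omega, show 1 ≤ p * p from by nlinarith]
    ring
  rw [harith] at hdc
  rw [← hBdef] at hdc
  have hBcard : B.card = (q - 1) / 2 := by omega
  have hNZcard : (Finset.univ.filter (fun ab : ZMod p × ZMod p => ab ≠ 0)).card = q - 1 := by
    rw [Finset.filter_ne', Finset.card_erase_of_mem (Finset.mem_univ _), Finset.card_univ]
    have : Fintype.card (ZMod p × ZMod p) = p * p := by
      rw [Fintype.card_prod, ZMod.card]
    rw [this, ← hq2]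
  have hsplit : B.card + B'.card = q - 1 := by
    have hpart := Finset.card_filter_add_card_filter_not
      (s := Finset.univ.filter (fun ab : ZMod p × ZMod p => ab ≠ 0))
      (p := fun ab : ZMod p × ZMod p => ∃ i : Fin L, Vfun p ab.1 ab.2 (i:ℕ) = 0)
    rw [Finset.filter_filter, Finset.filter_filter, hNZcard] at hpart
    rw [hBdef, hB'def]
    exact hpart
  have hB'card : B'.card = (q - 1) / 2 := by omega
  -- the three set identities
  have hmemiff : ∀ v : Fin L → ZMod p, v ∈ fibCode p L ↔ ∃ ab, v = PhiF p L ab :=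
    mem_fibCode_iff h0 h1 hL hl
  refine ⟨?_, ?_, ?_, ?_⟩
  · have hS0 : {v : Fin L → ZMod p | v ∈ fibCode p L ∧ hammingNorm v = 0} = {0} := by
      ext v
      simp only [Set.mem_setOf_eq, Set.mem_singleton_iff]
      constructor
      · rintro ⟨-, hn⟩; exact hammingNorm_eq_zero.1 hn
      · rintro rfl; exact ⟨Submodule.zero_mem _, hammingNorm_zero⟩
    rw [hS0, Set.ncard_singleton]
  · have hS1 : {v : Fin L → ZMod p | v ∈ fibCode p L ∧ hammingNorm v = 2*p-2}
        = PhiF p L '' (B : Set (ZMod p × ZMod p)) := by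
      ext v
      simp only [Set.mem_setOf_eq, Set.mem_image, Finset.mem_coe, hBdef,
        Finset.mem_filter, Finset.mem_univ, true_and]
      constructor
      · rintro ⟨hv, hn⟩
        obtain ⟨ab, rfl⟩ := (hmemiff _).1 hv
        have habne : ab ≠ 0 := by
          rintro rfl
          rw [hPhi0, hammingNorm_zero] at hn
          omega
        rcases hclass ab habne with ⟨hz, -⟩ | ⟨-, hw⟩
        · exact ⟨ab, ⟨habne, hz⟩, rfl⟩
        · rw [hw] at hn; omega
      · rintro ⟨ab, ⟨habne, hz⟩, rfl⟩
        refine ⟨(hmemiff _).2 ⟨ab, rfl⟩, ?_⟩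
        rcases hclass ab habne with ⟨-, hw⟩ | ⟨hz', -⟩
        · exact hw
        · exact absurd hz hz'
    rw [hS1, Set.ncard_image_of_injective _ hinj, Set.ncard_coe_finset, hBcard, hq]
  · have hS2 : {v : Fin L → ZMod p | v ∈ fibCode p L ∧ hammingNorm v = L}
        = PhiF p L '' (B' : Set (ZMod p × ZMod p)) := by
      ext v
      simp only [Set.mem_setOf_eq, Set.mem_image, Finset.mem_coe, hB'def,
        Finset.mem_filter, Finset.mem_univ, true_and]
      constructor
      · rintro ⟨hv, hn⟩
        obtain ⟨ab, rfl⟩ := (hmemiff _).1 hv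
        have habne : ab ≠ 0 := by
          rintro rfl
          rw [hPhi0, hammingNorm_zero] at hn
          omega
        rcases hclass ab habne with ⟨-, hw⟩ | ⟨hz, -⟩
        · rw [hw] at hn; omega
        · exact ⟨ab, ⟨habne, hz⟩, rfl⟩
      · rintro ⟨ab, ⟨habne, hz⟩, rfl⟩
        refine ⟨(hmemiff _).2 ⟨ab, rfl⟩, ?_⟩
        rcases hclass ab habne with ⟨hz', -⟩ | ⟨-, hw⟩
        · exact absurd hz' hz
        · exact hw
    rw [hS2, Set.ncard_image_of_injective _ hinj, Set.ncard_coe_finset, hB'card, hq]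
  · intro w hw0 hw1 hw2
    have hS3 : {v : Fin L → ZMod p | v ∈ fibCode p L ∧ hammingNorm v = w}
        = (∅ : Set (Fin L → ZMod p)) := by
      rw [Set.eq_empty_iff_forall_notMem]
      rintro v ⟨hv, hn⟩
      obtain ⟨ab, rfl⟩ := (hmemiff _).1 hv
      by_cases habne : ab = 0
      · rw [habne, hPhi0, hammingNorm_zero] at hn
        exact hw0 hn.symm
      · rcases hclass ab habne with ⟨-, hw⟩ | ⟨-, hw⟩
        · rw [hw] at hn; exact hw1 hn.symm
        · rw [hw] at hn; exact hw2 hn.symm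
    rw [hS3, Set.ncard_empty]
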